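/- Let Y ⊆ L²([0,1]) be a set of random variables such that there exist a,γ > 0 with Prob(|x| ≥ a‖x‖_{L²}) ≥ γ for all x ∈ Y. Let x,y ∈ Y be independent random variables with ‖x‖_{L²} ≥ ‖y‖_{L²}. Then 2aγ‖y‖_{L²} ≤ ‖ |x+y| − |x−y| ‖_{L²([0,1])}. -/

import Mathlib

open MeasureTheory ProbabilityTheory

noncomputable section

/-- Lebesgue measure on `[0,1]`, viewed as a probability space. -/
def μ01 : Measure ℝ := volume.restrict (Set.Icc 0 1)

lemma abs_key (u v c : ℝ) (hu : c ≤ |u|) (hv : c ≤ |v|) :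
    2 * c ≤ |abs (u + v) - abs (u - v)| := by
  rcases abs_cases u with ⟨h1, h1'⟩ | ⟨h1, h1'⟩ <;>
  rcases abs_cases v with ⟨h2, h2'⟩ | ⟨h2, h2'⟩ <;>
  rcases abs_cases (u + v) with ⟨h3, h3'⟩ | ⟨h3, h3'⟩ <;>
  rcases abs_cases (u - v) with ⟨h4, h4'⟩ | ⟨h4, h4'⟩ <;>
  rcases abs_cases (abs (u + v) - abs (u - v)) with ⟨h5, h5'⟩ | ⟨h5, h5'⟩ <;>
  linarith

/-- Lemma 2.3: if `Y ⊆ L²([0,1])` satisfies `Prob(|z| ≥ a‖z‖) ≥ γ` for all `z ∈ Y`, and `x, y ∈ Y`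
are independent with `‖x‖ ≥ ‖y‖`, then `2aγ‖y‖ ≤ ‖|x+y| - |x-y|‖`. -/
theorem lower_bound_of_independent
    (Y : Set (Lp ℝ 2 μ01)) (a γ : ℝ) (ha : 0 < a) (hγ : 0 < γ)
    (hY : ∀ z ∈ Y, ENNReal.ofReal γ ≤ μ01 {t | a * ‖z‖ ≤ |(z : ℝ → ℝ) t|})
    (x y : Lp ℝ 2 μ01) (hx : x ∈ Y) (hy : y ∈ Y)
    (h_indep : IndepFun ((x : ℝ → ℝ)) ((y : ℝ → ℝ)) μ01)
    (h_norm : ‖y‖ ≤ ‖x‖) :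
    2 * a * γ * ‖y‖ ≤ ‖|x + y| - |x - y|‖ := by
  set f : ℝ → ℝ := (x : ℝ → ℝ)
  set g : ℝ → ℝ := (y : ℝ → ℝ)
  set c : ℝ := 2 * a * ‖y‖ with hc
  have hc0 : 0 ≤ c := by positivity
  -- the target sets as preimages
  have hAmeas : MeasurableSet {s : ℝ | a * ‖x‖ ≤ |s|} :=
    measurableSet_le measurable_const (measurable_id.abs)
  have hBmeas : MeasurableSet {s : ℝ | a * ‖y‖ ≤ |s|} :=
    measurableSet_le measurable_const (measurable_id.abs)
  set S : Set ℝ := f ⁻¹' {s : ℝ | a * ‖x‖ ≤ |s|} ∩ g ⁻¹' {s : ℝ | a * ‖y‖ ≤ |s|} with hS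
  have hSmeas : MeasurableSet S :=
    ((Lp.stronglyMeasurable x).measurable hAmeas).inter
      ((Lp.stronglyMeasurable y).measurable hBmeas)
  have hμS : ENNReal.ofReal γ * ENNReal.ofReal γ ≤ μ01 S := by
    rw [hS, h_indep.measure_inter_preimage_eq_mul _ _ hAmeas hBmeas]
    exact mul_le_mul' (hY x hx) (hY y hy)
  -- pointwise bound
  set h : Lp ℝ 2 μ01 := |x + y| - |x - y| with hh
  have hae : ∀ᵐ t ∂μ01,
      ‖S.indicator (fun _ => c) t‖ ≤ ‖(h : ℝ → ℝ) t‖ := by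
    filter_upwards [Lp.coeFn_sub (|x + y|) (|x - y|), Lp.coeFn_abs (x + y),
      Lp.coeFn_abs (x - y), Lp.coeFn_add x y, Lp.coeFn_sub x y] with t h1 h2 h3 h4 h5
    by_cases ht : t ∈ S
    · have hft : a * ‖y‖ ≤ |f t| := le_trans (by nlinarith [abs_nonneg (f t)]) ht.1
      have hgt : a * ‖y‖ ≤ |g t| := ht.2
      have key := abs_key (f t) (g t) (a * ‖y‖) hft hgt
      rw [Set.indicator_of_mem ht]
      simp only [Pi.sub_apply, Pi.add_apply] at h1 h2 h3 h4 h5 ⊢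
      rw [h1, h2, h3, h4, h5]
      rw [Real.norm_eq_abs, Real.norm_eq_abs]
      calc |c| = 2 * (a * ‖y‖) := by rw [abs_of_nonneg hc0]; ring
        _ ≤ _ := key
    · rw [Set.indicator_of_notMem ht]
      simp [norm_nonneg]
  -- compare eLpNorms
  have h2 : eLpNorm (S.indicator (fun _ => c)) 2 μ01 ≤ eLpNorm (h : ℝ → ℝ) 2 μ01 :=
    eLpNorm_mono_ae hae
  have hind : eLpNorm (S.indicator (fun _ => c)) 2 μ01
      = ‖c‖₊ * μ01 S ^ (1 / (2:ℝ)) := by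
    rw [eLpNorm_indicator_const hSmeas (by norm_num) (by norm_num)]
    norm_num
    rfl
  have hlow : ENNReal.ofReal (c * γ) ≤ eLpNorm (h : ℝ → ℝ) 2 μ01 := by
    refine le_trans ?_ h2
    rw [hind]
    have h3 : ENNReal.ofReal γ ≤ μ01 S ^ (1 / (2:ℝ)) := by
      have : (ENNReal.ofReal γ * ENNReal.ofReal γ) ^ (1 / (2:ℝ))
          ≤ μ01 S ^ (1 / (2:ℝ)) :=
        ENNReal.rpow_le_rpow hμS (by norm_num)
      refine le_trans (le_of_eq ?_) this
      rw [← ENNReal.ofReal_mul hγ.le,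
        ENNReal.ofReal_rpow_of_nonneg (by positivity) (by norm_num : (0:ℝ) ≤ 1/2)]
      congr 1
      rw [← Real.sqrt_eq_rpow, Real.sqrt_mul_self hγ.le]
    calc ENNReal.ofReal (c * γ) = ENNReal.ofReal c * ENNReal.ofReal γ :=
          ENNReal.ofReal_mul hc0
      _ ≤ (‖c‖₊ : ENNReal) * μ01 S ^ (1 / (2:ℝ)) := by
          gcongr
          rw [← enorm_eq_nnnorm, Real.enorm_eq_ofReal hc0]
  have hle : c * γ ≤ ‖h‖ := by
    rw [Lp.norm_def]
    have := ENNReal.toReal_mono (Lp.eLpNorm_ne_top h) hlow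
    rwa [ENNReal.toReal_ofReal (by positivity)] at this
  calc 2 * a * γ * ‖y‖ = c * γ := by rw [hc]; ring
    _ ≤ ‖h‖ := hle
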